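/- Let N ≥ 2, σ_k > 0 for k = 1,…,N−1, and suppose α, α' : Fin N → ℝ both satisfy the stability condition (all partial sums up to N−1 negative) with α'_j ≤ α_j for all j and α'_j < α_j for at least one j ≤ K (for some K < N−1). Let θ and θ' be the unique normalized decreasing share vectors with log θ_k − log θ_{k+1} = σ_k²/(−4∑_{j≤k} α_j) and similarly for θ' with α'. Then for every k ≤ K the log-gap under α' is weakly smaller: σ_k²/(−4∑_{j≤k} α'_j) ≤ σ_k²/(−4∑_{j≤k} α_j), with strict inequality for k with ∑_{j≤k} α'_j < ∑_{j≤k} α_j; consequently θ'_1 < θ_1. -/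

import Mathlib

/-- Partial sum of the first `k` values of `α` (0-based indices `0,…,k-1`). -/
noncomputable def psum {N : ℕ} (α : Fin N → ℝ) (k : ℕ) : ℝ :=
  ∑ j ∈ Finset.univ.filter (fun j : Fin N => (j : ℕ) < k), α j

/-- Comparative statics of a progressive capital tax: lowering the relative growth rates
of top-ranked households (`α'_j ≤ α_j` everywhere, strictly for some `j` among the top `K`
ranks) weakly shrinks every top log-gap `σ_k²/(−4∑_{j≤k} α_j)` (strictly where the partial
sums differ), and hence strictly lowers the top share: `θ'_1 < θ_1`. -/
theorem stmt15 (N : ℕ) (hN : 2 ≤ N) (σ : ℕ → ℝ)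
    (hσ : ∀ k, 1 ≤ k → k ≤ N - 1 → 0 < σ k)
    (α α' : Fin N → ℝ)
    (hstab : ∀ k, 1 ≤ k → k ≤ N - 1 → psum α k < 0)
    (hstab' : ∀ k, 1 ≤ k → k ≤ N - 1 → psum α' k < 0)
    (hle : ∀ j, α' j ≤ α j)
    (K : ℕ) (hK1 : 1 ≤ K) (hK : K < N - 1)
    (hstrict : ∃ j : Fin N, (j : ℕ) + 1 ≤ K ∧ α' j < α j)
    (θ θ' : Fin N → ℝ)
    (hθpos : ∀ k, 0 < θ k) (hθ'pos : ∀ k, 0 < θ' k)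
    (hθsum : ∑ k, θ k = 1) (hθ'sum : ∑ k, θ' k = 1)
    (hθgap : ∀ k : ℕ, ∀ h1 : 1 ≤ k, ∀ h2 : k ≤ N - 1,
      Real.log (θ ⟨k - 1, by omega⟩) - Real.log (θ ⟨k, by omega⟩) =
        σ k ^ 2 / (-4 * psum α k))
    (hθ'gap : ∀ k : ℕ, ∀ h1 : 1 ≤ k, ∀ h2 : k ≤ N - 1,
      Real.log (θ' ⟨k - 1, by omega⟩) - Real.log (θ' ⟨k, by omega⟩) =
        σ k ^ 2 / (-4 * psum α' k)) :
    (∀ k, 1 ≤ k → k ≤ K →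
      σ k ^ 2 / (-4 * psum α' k) ≤ σ k ^ 2 / (-4 * psum α k) ∧
      (psum α' k < psum α k →
        σ k ^ 2 / (-4 * psum α' k) < σ k ^ 2 / (-4 * psum α k))) ∧
    θ' ⟨0, by omega⟩ < θ ⟨0, by omega⟩ := by
  have hNpos : 0 < N := by omega
  -- partial sum comparisons
  have hps : ∀ k : ℕ, psum α' k ≤ psum α k := by
    intro k
    exact Finset.sum_le_sum (fun j _ => hle j)
  have hpsK : psum α' K < psum α K := by
    obtain ⟨j, hj1, hj2⟩ := hstrict
    refine Finset.sum_lt_sum (fun i _ => hle i) ⟨j, ?_, hj2⟩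
    simp only [Finset.mem_filter, Finset.mem_univ, true_and]
    omega
  -- gap comparisons for all 1 ≤ k ≤ N-1
  have hgap : ∀ k : ℕ, 1 ≤ k → k ≤ N - 1 →
      σ k ^ 2 / (-4 * psum α' k) ≤ σ k ^ 2 / (-4 * psum α k) ∧
      (psum α' k < psum α k →
        σ k ^ 2 / (-4 * psum α' k) < σ k ^ 2 / (-4 * psum α k)) := by
    intro k h1 h2
    have hσk : 0 < σ k ^ 2 := pow_pos (hσ k h1 h2) 2
    have hd : 0 < -4 * psum α k := by nlinarith [hstab k h1 h2]
    have hd' : -4 * psum α k ≤ -4 * psum α' k := by nlinarith [hps k]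
    constructor
    · exact div_le_div_of_nonneg_left hσk.le hd hd'
    · intro hlt
      exact div_lt_div_of_pos_left hσk hd (by nlinarith)
  refine ⟨fun k h1 h2 => hgap k h1 (by omega), ?_⟩
  -- cumulative comparison
  have key : ∀ k : ℕ, (hk : k ≤ N - 1) →
      (Real.log (θ' ⟨0, by omega⟩) - Real.log (θ' ⟨k, by omega⟩) ≤
        Real.log (θ ⟨0, by omega⟩) - Real.log (θ ⟨k, by omega⟩)) ∧
      (K ≤ k →
        Real.log (θ' ⟨0, by omega⟩) - Real.log (θ' ⟨k, by omega⟩) <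
          Real.log (θ ⟨0, by omega⟩) - Real.log (θ ⟨k, by omega⟩)) := by
    intro k
    induction k with
    | zero => exact fun _ => ⟨by simp, by omega⟩
    | succ n ih =>
      intro hk
      have hn : n ≤ N - 1 := by omega
      obtain ⟨ihle, ihlt⟩ := ih hn
      have hg := hθgap (n + 1) (by omega) hk
      have hg' := hθ'gap (n + 1) (by omega) hk
      have hgc := hgap (n + 1) (by omega) hk
      have e1 : (⟨n + 1 - 1, by omega⟩ : Fin N) = ⟨n, by omega⟩ := rfl
      rw [e1] at hg hg'
      constructor
      · have := hgc.1
        linarith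
      · intro hKn
        rcases Nat.lt_or_ge K (n + 1) with h | h
        · have := ihlt (by omega)
          have := hgc.1
          linarith
        · have hKeq : K = n + 1 := by omega
          have hstrictgap := hgc.2 (by rw [← hKeq] at *; exact hpsK)
          linarith
  -- ratio comparison for each index
  have hratio : ∀ i : Fin N, θ i / θ ⟨0, by omega⟩ ≤ θ' i / θ' ⟨0, by omega⟩ := by
    intro i
    have hi : (i : ℕ) ≤ N - 1 := by omega
    have h := (key i hi).1
    have hi' : (⟨(i : ℕ), by omega⟩ : Fin N) = i := rfl
    rw [hi'] at h
    rw [div_le_div_iff₀ (hθpos _) (hθ'pos _)]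
    have hlog : Real.log (θ i) + Real.log (θ' ⟨0, by omega⟩) ≤
        Real.log (θ' i) + Real.log (θ ⟨0, by omega⟩) := by linarith
    have := Real.exp_le_exp.mpr hlog
    rwa [Real.exp_add, Real.exp_add, Real.exp_log (hθpos _), Real.exp_log (hθpos _),
      Real.exp_log (hθ'pos _), Real.exp_log (hθ'pos _)] at this
  have hratioK : θ ⟨K, by omega⟩ / θ ⟨0, by omega⟩ < θ' ⟨K, by omega⟩ / θ' ⟨0, by omega⟩ := by
    have h := (key K (by omega)).2 (le_refl K)
    rw [div_lt_div_iff₀ (hθpos _) (hθ'pos _)]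
    have hlog : Real.log (θ ⟨K, by omega⟩) + Real.log (θ' ⟨0, by omega⟩) <
        Real.log (θ' ⟨K, by omega⟩) + Real.log (θ ⟨0, by omega⟩) := by linarith
    have := Real.exp_lt_exp.mpr hlog
    rwa [Real.exp_add, Real.exp_add, Real.exp_log (hθpos _), Real.exp_log (hθpos _),
      Real.exp_log (hθ'pos _), Real.exp_log (hθ'pos _)] at this
  have hsum : ∑ i : Fin N, θ i / θ ⟨0, by omega⟩ < ∑ i : Fin N, θ' i / θ' ⟨0, by omega⟩ :=
    Finset.sum_lt_sum (fun i _ => hratio i) ⟨⟨K, by omega⟩, Finset.mem_univ _, hratioK⟩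
  rw [← Finset.sum_div, ← Finset.sum_div, hθsum, hθ'sum] at hsum
  rw [div_lt_div_iff₀ (hθpos _) (hθ'pos _), one_mul, one_mul] at hsum
  exact hsum
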